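/- Let q ∈ ℂ[X_0,…,X_5] be homogeneous of degree 2 and suppose that q(z) = 0 for every z : Fin 6 → ℂ such that z_0+⋯+z_5 = 0 and z_a = z_b for every pair {a,b} of some perfect matching of Fin 6 (i.e. q vanishes on all 15 singular lines of the Igusa quartic). Then there exists a homogeneous linear form ℓ with q = (X_0+⋯+X_5)·ℓ; equivalently, no nonzero quadric of the hyperplane P^4 = {Σ z_i = 0} contains the singular locus of the Igusa quartic. -/

import Mathlib

open MvPolynomial

/-- A perfect matching of `Fin 6`. -/
def IsPerfectMatching (M : Finset (Finset (Fin 6))) : Prop :=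
  M.card = 3 ∧ (∀ p ∈ M, p.card = 2) ∧
    (∀ p ∈ M, ∀ q ∈ M, p ≠ q → Disjoint p q) ∧
    ∀ i : Fin 6, ∃ p ∈ M, i ∈ p

/-- The singular line `L_M` of the Igusa quartic. -/
def LineOf (M : Finset (Finset (Fin 6))) : Set (Fin 6 → ℂ) :=
  {z | (∑ i, z i) = 0 ∧ ∀ p ∈ M, ∀ a ∈ p, ∀ b ∈ p, z a = z b}

set_option maxRecDepth 40000
set_option maxHeartbeats 1600000

noncomputable section IgusaAux
open MvPolynomial

noncomputable section IgusaAux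

def mm (i j : Fin 6) : Fin 6 →₀ ℕ := Finsupp.single i 1 + Finsupp.single j 1

lemma mm_comm (i j : Fin 6) : mm i j = mm j i := add_comm _ _

lemma mm_eq_toFinsupp (i j : Fin 6) : mm i j = Multiset.toFinsupp {i, j} := by
  have h : ({i, j} : Multiset (Fin 6)) = {i} + {j} := (Multiset.singleton_add i {j}).symm
  rw [h, Multiset.toFinsupp_add, Multiset.toFinsupp_singleton, Multiset.toFinsupp_singleton, mm]

lemma mm_degree (i j : Fin 6) : (mm i j).degree = 2 := by
  have : (mm i j).degree = ∑ x : Fin 6, (mm i j) x := by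
    rw [Finsupp.degree]
    exact Finset.sum_subset (Finset.subset_univ _)
      (by intro x _ hx; simpa [Finsupp.notMem_support_iff] using hx)
  rw [this]
  simp only [mm, Finsupp.add_apply, Finsupp.single_apply, Finset.sum_add_distrib]
  simp

lemma mm_inj {i j k l : Fin 6} (h : mm i j = mm k l) :
    (i = k ∧ j = l) ∨ (i = l ∧ j = k) := by
  rw [mm_eq_toFinsupp, mm_eq_toFinsupp] at h
  have h2 : ({i, j} : Multiset (Fin 6)) = {k, l} := Multiset.toFinsupp.injective h
  have h3 : (i ::ₘ {j} : Multiset (Fin 6)) = k ::ₘ {l} := h2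
  rw [Multiset.cons_eq_cons] at h3
  rcases h3 with ⟨h1, h4⟩ | ⟨hne, cs, h4, h5⟩
  · left; exact ⟨h1, by simpa using h4⟩
  · rw [Multiset.singleton_eq_cons_iff] at h4 h5
    right; exact ⟨h5.1.symm, h4.1⟩

lemma classify (d : Fin 6 →₀ ℕ) (hd : d.degree = 2) :
    ∃ k l : Fin 6, k ≤ l ∧ d = mm k l := by
  have hc : Multiset.card d.toMultiset = 2 := by
    rw [Finsupp.card_toMultiset]
    rw [← hd]; rfl
  obtain ⟨a, b, hab⟩ := Multiset.card_eq_two.mp hc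
  have hd2 : d = mm a b := by
    have h := congrArg Multiset.toFinsupp hab
    rwa [Finsupp.toMultiset_toFinsupp, ← mm_eq_toFinsupp] at h
  rcases le_total a b with hle | hle
  · exact ⟨a, b, hle, hd2⟩
  · exact ⟨b, a, hle, hd2.trans (mm_comm a b)⟩

lemma monomial_mm (i j : Fin 6) (a : ℂ) : (monomial (mm i j)) a = C a * X i * X j := by
  rw [mm, monomial_add_single, ← C_mul_X_pow_eq_monomial, pow_one, pow_one]

def Bq (q : MvPolynomial (Fin 6) ℂ) (p : Fin 6 × Fin 6) : ℂ :=
  if p.1.val ≤ p.2.val then coeff (mm p.1 p.2) q else 0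

lemma coeff_msum (B : Fin 6 × Fin 6 → ℂ) (d : Fin 6 →₀ ℕ) :
    coeff d (∑ p : Fin 6 × Fin 6, monomial (mm p.1 p.2) (B p)) =
      ∑ p : Fin 6 × Fin 6, if mm p.1 p.2 = d then B p else 0 := by
  rw [MvPolynomial.coeff_sum]
  simp [coeff_monomial]

lemma coeff_msum_ne (B : Fin 6 × Fin 6 → ℂ) (d : Fin 6 →₀ ℕ) (hd : d.degree ≠ 2) :
    coeff d (∑ p : Fin 6 × Fin 6, monomial (mm p.1 p.2) (B p)) = 0 := by
  rw [coeff_msum]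
  apply Finset.sum_eq_zero
  intro p _
  rw [if_neg]
  intro h
  exact hd (h ▸ mm_degree p.1 p.2)

lemma coeff_msum_diag (B : Fin 6 × Fin 6 → ℂ) (k : Fin 6) :
    coeff (mm k k) (∑ p : Fin 6 × Fin 6, monomial (mm p.1 p.2) (B p)) = B (k, k) := by
  rw [coeff_msum, Finset.sum_eq_single (k, k)]
  · rw [if_pos rfl]
  · intro p _ hp
    rw [if_neg]
    intro h
    rcases mm_inj h with ⟨h1, h2⟩ | ⟨h1, h2⟩ <;> exact hp (Prod.ext h1 h2)
  · intro h; exact absurd (Finset.mem_univ _) h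

lemma coeff_msum_offdiag (B : Fin 6 × Fin 6 → ℂ) {k l : Fin 6} (hkl : k ≠ l) :
    coeff (mm k l) (∑ p : Fin 6 × Fin 6, monomial (mm p.1 p.2) (B p)) = B (k, l) + B (l, k) := by
  rw [coeff_msum]
  have key : ∀ p : Fin 6 × Fin 6, (if mm p.1 p.2 = mm k l then B p else 0) =
      (if p = (k, l) then B p else 0) + (if p = (l, k) then B p else 0) := by
    intro p
    by_cases h1 : p = (k, l)
    · subst h1
      rw [if_pos rfl, if_pos rfl, if_neg (by simp [Prod.ext_iff]; intro h; exact absurd h hkl),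
        add_zero]
    · by_cases h2 : p = (l, k)
      · subst h2
        rw [if_pos (mm_comm l k), if_neg h1, if_pos rfl, zero_add]
      · rw [if_neg h1, if_neg h2, add_zero]
        rw [if_neg]
        intro h
        rcases mm_inj h with ⟨ha, hb⟩ | ⟨ha, hb⟩
        · exact h1 (Prod.ext ha hb)
        · exact h2 (Prod.ext ha hb)
  rw [Finset.sum_congr rfl fun p _ => key p, Finset.sum_add_distrib]
  rw [Finset.sum_ite_eq' Finset.univ (k, l) B, Finset.sum_ite_eq' Finset.univ (l, k) B]
  simp

lemma rep (q : MvPolynomial (Fin 6) ℂ) (hq : q.IsHomogeneous 2) :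
    q = ∑ p : Fin 6 × Fin 6, monomial (mm p.1 p.2) (Bq q p) := by
  apply MvPolynomial.ext
  intro d
  by_cases hd : d.degree = 2
  · obtain ⟨k, l, hkl, rfl⟩ := classify d hd
    rcases hkl.lt_or_eq with hlt | rfl
    · rw [coeff_msum_offdiag _ hlt.ne]
      have h1 : Bq q (k, l) = coeff (mm k l) q := if_pos hlt.le
      have h2 : Bq q (l, k) = 0 := if_neg (by exact not_le.mpr hlt)
      rw [h1, h2, add_zero]
    · rw [coeff_msum_diag]
      exact (if_pos le_rfl).symm
  · rw [coeff_msum_ne _ _ hd, hq.coeff_eq_zero hd]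

lemma evalq (q : MvPolynomial (Fin 6) ℂ) (hq : q.IsHomogeneous 2) (z : Fin 6 → ℂ) :
    eval z q = ∑ p : Fin 6 × Fin 6, Bq q p * (z p.1 * z p.2) := by
  conv_lhs => rw [rep q hq]
  rw [map_sum]
  refine Finset.sum_congr rfl fun p _ => ?_
  rw [monomial_mm]
  simp [mul_assoc]

lemma evalq' (q : MvPolynomial (Fin 6) ℂ) (hq : q.IsHomogeneous 2) (z : Fin 6 → ℂ) :
    eval z q =
      coeff (mm 0 0) q * (z 0 * z 0) +
      coeff (mm 0 1) q * (z 0 * z 1) +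
      coeff (mm 0 2) q * (z 0 * z 2) +
      coeff (mm 0 3) q * (z 0 * z 3) +
      coeff (mm 0 4) q * (z 0 * z 4) +
      coeff (mm 0 5) q * (z 0 * z 5) +
      coeff (mm 1 1) q * (z 1 * z 1) +
      coeff (mm 1 2) q * (z 1 * z 2) +
      coeff (mm 1 3) q * (z 1 * z 3) +
      coeff (mm 1 4) q * (z 1 * z 4) +
      coeff (mm 1 5) q * (z 1 * z 5) +
      coeff (mm 2 2) q * (z 2 * z 2) +
      coeff (mm 2 3) q * (z 2 * z 3) +
      coeff (mm 2 4) q * (z 2 * z 4) +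
      coeff (mm 2 5) q * (z 2 * z 5) +
      coeff (mm 3 3) q * (z 3 * z 3) +
      coeff (mm 3 4) q * (z 3 * z 4) +
      coeff (mm 3 5) q * (z 3 * z 5) +
      coeff (mm 4 4) q * (z 4 * z 4) +
      coeff (mm 4 5) q * (z 4 * z 5) +
      coeff (mm 5 5) q * (z 5 * z 5) := by
  rw [evalq q hq z, Fintype.sum_prod_type]
  simp only [Fin.sum_univ_six, Bq]
  norm_num [show ((3:Fin 6)).val = 3 from rfl, show ((4:Fin 6)).val = 4 from rfl,
    show ((5:Fin 6)).val = 5 from rfl]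
  ring

def pt (a b c d e f : ℂ) : Fin 6 → ℂ := fun i => match i with
  | 0 => a | 1 => b | 2 => c | 3 => d | 4 => e | 5 => f

@[simp] lemma pt0 (a b c d e f : ℂ) : pt a b c d e f 0 = a := rfl
@[simp] lemma pt1 (a b c d e f : ℂ) : pt a b c d e f 1 = b := rfl
@[simp] lemma pt2 (a b c d e f : ℂ) : pt a b c d e f 2 = c := rfl
@[simp] lemma pt3 (a b c d e f : ℂ) : pt a b c d e f 3 = d := rfl
@[simp] lemma pt4 (a b c d e f : ℂ) : pt a b c d e f 4 = e := rfl
@[simp] lemma pt5 (a b c d e f : ℂ) : pt a b c d e f 5 = f := rfl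

/-- No nonzero quadric of the hyperplane `{∑ zᵢ = 0}` contains the singular locus of the
Igusa quartic: a quadric vanishing on all `15` singular lines is divisible by `∑ Xᵢ`. -/
theorem no_quadric_contains_igusa_singular_locus (q : MvPolynomial (Fin 6) ℂ)
    (hq : q.IsHomogeneous 2)
    (hvanish : ∀ z : Fin 6 → ℂ,
      (∃ M : Finset (Finset (Fin 6)), IsPerfectMatching M ∧ z ∈ LineOf M) →
      eval z q = 0) :
    ∃ ℓ : MvPolynomial (Fin 6) ℂ, ℓ.IsHomogeneous 1 ∧
      q = (∑ i : Fin 6, X i) * ℓ := by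
  have hev := evalq' q hq
  have E0 : coeff (mm 0 0) q + coeff (mm 0 1) q - coeff (mm 0 4) q - coeff (mm 0 5) q + coeff (mm 1 1) q - coeff (mm 1 4) q - coeff (mm 1 5) q + coeff (mm 4 4) q + coeff (mm 4 5) q + coeff (mm 5 5) q = 0 := by
    have h := hvanish (pt (1) (1) (0) (0) (-1) (-1))
      ⟨({{0, 1}, {2, 3}, {4, 5}} : Finset (Finset (Fin 6))), by unfold IsPerfectMatching; decide, by
        constructor
        · simp [Fin.sum_univ_six]; try ring
        · intro p hp a ha b hb
          fin_cases hp <;> fin_cases ha <;> fin_cases hb <;> simp⟩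
    rw [hev] at h
    simp only [pt0, pt1, pt2, pt3, pt4, pt5] at h
    linear_combination h
  have E1 : coeff (mm 2 2) q + coeff (mm 2 3) q - coeff (mm 2 4) q - coeff (mm 2 5) q + coeff (mm 3 3) q - coeff (mm 3 4) q - coeff (mm 3 5) q + coeff (mm 4 4) q + coeff (mm 4 5) q + coeff (mm 5 5) q = 0 := by
    have h := hvanish (pt (0) (0) (1) (1) (-1) (-1))
      ⟨({{0, 1}, {2, 3}, {4, 5}} : Finset (Finset (Fin 6))), by unfold IsPerfectMatching; decide, by
        constructor
        · simp [Fin.sum_univ_six]; try ring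
        · intro p hp a ha b hb
          fin_cases hp <;> fin_cases ha <;> fin_cases hb <;> simp⟩
    rw [hev] at h
    simp only [pt0, pt1, pt2, pt3, pt4, pt5] at h
    linear_combination h
  have E2 : coeff (mm 0 0) q + coeff (mm 0 1) q + coeff (mm 0 2) q + coeff (mm 0 3) q - (2:ℂ) * coeff (mm 0 4) q - (2:ℂ) * coeff (mm 0 5) q + coeff (mm 1 1) q + coeff (mm 1 2) q + coeff (mm 1 3) q - (2:ℂ) * coeff (mm 1 4) q - (2:ℂ) * coeff (mm 1 5) q + coeff (mm 2 2) q + coeff (mm 2 3) q - (2:ℂ) * coeff (mm 2 4) q - (2:ℂ) * coeff (mm 2 5) q + coeff (mm 3 3) q - (2:ℂ) * coeff (mm 3 4) q - (2:ℂ) * coeff (mm 3 5) q + (4:ℂ) * coeff (mm 4 4) q + (4:ℂ) * coeff (mm 4 5) q + (4:ℂ) * coeff (mm 5 5) q = 0 := by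
    have h := hvanish (pt (1) (1) (1) (1) (-2) (-2))
      ⟨({{0, 1}, {2, 3}, {4, 5}} : Finset (Finset (Fin 6))), by unfold IsPerfectMatching; decide, by
        constructor
        · simp [Fin.sum_univ_six]; try ring
        · intro p hp a ha b hb
          fin_cases hp <;> fin_cases ha <;> fin_cases hb <;> simp⟩
    rw [hev] at h
    simp only [pt0, pt1, pt2, pt3, pt4, pt5] at h
    linear_combination h
  have E3 : coeff (mm 0 0) q + coeff (mm 0 1) q - coeff (mm 0 3) q - coeff (mm 0 5) q + coeff (mm 1 1) q - coeff (mm 1 3) q - coeff (mm 1 5) q + coeff (mm 3 3) q + coeff (mm 3 5) q + coeff (mm 5 5) q = 0 := by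
    have h := hvanish (pt (1) (1) (0) (-1) (0) (-1))
      ⟨({{0, 1}, {2, 4}, {3, 5}} : Finset (Finset (Fin 6))), by unfold IsPerfectMatching; decide, by
        constructor
        · simp [Fin.sum_univ_six]; try ring
        · intro p hp a ha b hb
          fin_cases hp <;> fin_cases ha <;> fin_cases hb <;> simp⟩
    rw [hev] at h
    simp only [pt0, pt1, pt2, pt3, pt4, pt5] at h
    linear_combination h
  have E4 : coeff (mm 2 2) q - coeff (mm 2 3) q + coeff (mm 2 4) q - coeff (mm 2 5) q + coeff (mm 3 3) q - coeff (mm 3 4) q + coeff (mm 3 5) q + coeff (mm 4 4) q - coeff (mm 4 5) q + coeff (mm 5 5) q = 0 := by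
    have h := hvanish (pt (0) (0) (1) (-1) (1) (-1))
      ⟨({{0, 1}, {2, 4}, {3, 5}} : Finset (Finset (Fin 6))), by unfold IsPerfectMatching; decide, by
        constructor
        · simp [Fin.sum_univ_six]; try ring
        · intro p hp a ha b hb
          fin_cases hp <;> fin_cases ha <;> fin_cases hb <;> simp⟩
    rw [hev] at h
    simp only [pt0, pt1, pt2, pt3, pt4, pt5] at h
    linear_combination h
  have E5 : coeff (mm 0 0) q + coeff (mm 0 1) q - coeff (mm 0 3) q - coeff (mm 0 4) q + coeff (mm 1 1) q - coeff (mm 1 3) q - coeff (mm 1 4) q + coeff (mm 3 3) q + coeff (mm 3 4) q + coeff (mm 4 4) q = 0 := by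
    have h := hvanish (pt (1) (1) (0) (-1) (-1) (0))
      ⟨({{0, 1}, {2, 5}, {3, 4}} : Finset (Finset (Fin 6))), by unfold IsPerfectMatching; decide, by
        constructor
        · simp [Fin.sum_univ_six]; try ring
        · intro p hp a ha b hb
          fin_cases hp <;> fin_cases ha <;> fin_cases hb <;> simp⟩
    rw [hev] at h
    simp only [pt0, pt1, pt2, pt3, pt4, pt5] at h
    linear_combination h
  have E6 : coeff (mm 2 2) q - coeff (mm 2 3) q - coeff (mm 2 4) q + coeff (mm 2 5) q + coeff (mm 3 3) q + coeff (mm 3 4) q - coeff (mm 3 5) q + coeff (mm 4 4) q - coeff (mm 4 5) q + coeff (mm 5 5) q = 0 := by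
    have h := hvanish (pt (0) (0) (1) (-1) (-1) (1))
      ⟨({{0, 1}, {2, 5}, {3, 4}} : Finset (Finset (Fin 6))), by unfold IsPerfectMatching; decide, by
        constructor
        · simp [Fin.sum_univ_six]; try ring
        · intro p hp a ha b hb
          fin_cases hp <;> fin_cases ha <;> fin_cases hb <;> simp⟩
    rw [hev] at h
    simp only [pt0, pt1, pt2, pt3, pt4, pt5] at h
    linear_combination h
  have E7 : coeff (mm 0 0) q + coeff (mm 0 2) q - coeff (mm 0 4) q - coeff (mm 0 5) q + coeff (mm 2 2) q - coeff (mm 2 4) q - coeff (mm 2 5) q + coeff (mm 4 4) q + coeff (mm 4 5) q + coeff (mm 5 5) q = 0 := by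
    have h := hvanish (pt (1) (0) (1) (0) (-1) (-1))
      ⟨({{0, 2}, {1, 3}, {4, 5}} : Finset (Finset (Fin 6))), by unfold IsPerfectMatching; decide, by
        constructor
        · simp [Fin.sum_univ_six]; try ring
        · intro p hp a ha b hb
          fin_cases hp <;> fin_cases ha <;> fin_cases hb <;> simp⟩
    rw [hev] at h
    simp only [pt0, pt1, pt2, pt3, pt4, pt5] at h
    linear_combination h
  have E8 : coeff (mm 1 1) q + coeff (mm 1 3) q - coeff (mm 1 4) q - coeff (mm 1 5) q + coeff (mm 3 3) q - coeff (mm 3 4) q - coeff (mm 3 5) q + coeff (mm 4 4) q + coeff (mm 4 5) q + coeff (mm 5 5) q = 0 := by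
    have h := hvanish (pt (0) (1) (0) (1) (-1) (-1))
      ⟨({{0, 2}, {1, 3}, {4, 5}} : Finset (Finset (Fin 6))), by unfold IsPerfectMatching; decide, by
        constructor
        · simp [Fin.sum_univ_six]; try ring
        · intro p hp a ha b hb
          fin_cases hp <;> fin_cases ha <;> fin_cases hb <;> simp⟩
    rw [hev] at h
    simp only [pt0, pt1, pt2, pt3, pt4, pt5] at h
    linear_combination h
  have E9 : coeff (mm 0 0) q + coeff (mm 0 2) q - coeff (mm 0 3) q - coeff (mm 0 5) q + coeff (mm 2 2) q - coeff (mm 2 3) q - coeff (mm 2 5) q + coeff (mm 3 3) q + coeff (mm 3 5) q + coeff (mm 5 5) q = 0 := by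
    have h := hvanish (pt (1) (0) (1) (-1) (0) (-1))
      ⟨({{0, 2}, {1, 4}, {3, 5}} : Finset (Finset (Fin 6))), by unfold IsPerfectMatching; decide, by
        constructor
        · simp [Fin.sum_univ_six]; try ring
        · intro p hp a ha b hb
          fin_cases hp <;> fin_cases ha <;> fin_cases hb <;> simp⟩
    rw [hev] at h
    simp only [pt0, pt1, pt2, pt3, pt4, pt5] at h
    linear_combination h
  have E10 : coeff (mm 0 0) q + coeff (mm 0 2) q - coeff (mm 0 3) q - coeff (mm 0 4) q + coeff (mm 2 2) q - coeff (mm 2 3) q - coeff (mm 2 4) q + coeff (mm 3 3) q + coeff (mm 3 4) q + coeff (mm 4 4) q = 0 := by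
    have h := hvanish (pt (1) (0) (1) (-1) (-1) (0))
      ⟨({{0, 2}, {1, 5}, {3, 4}} : Finset (Finset (Fin 6))), by unfold IsPerfectMatching; decide, by
        constructor
        · simp [Fin.sum_univ_six]; try ring
        · intro p hp a ha b hb
          fin_cases hp <;> fin_cases ha <;> fin_cases hb <;> simp⟩
    rw [hev] at h
    simp only [pt0, pt1, pt2, pt3, pt4, pt5] at h
    linear_combination h
  have E11 : coeff (mm 0 0) q + coeff (mm 0 3) q - coeff (mm 0 4) q - coeff (mm 0 5) q + coeff (mm 3 3) q - coeff (mm 3 4) q - coeff (mm 3 5) q + coeff (mm 4 4) q + coeff (mm 4 5) q + coeff (mm 5 5) q = 0 := by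
    have h := hvanish (pt (1) (0) (0) (1) (-1) (-1))
      ⟨({{0, 3}, {1, 2}, {4, 5}} : Finset (Finset (Fin 6))), by unfold IsPerfectMatching; decide, by
        constructor
        · simp [Fin.sum_univ_six]; try ring
        · intro p hp a ha b hb
          fin_cases hp <;> fin_cases ha <;> fin_cases hb <;> simp⟩
    rw [hev] at h
    simp only [pt0, pt1, pt2, pt3, pt4, pt5] at h
    linear_combination h
  have E12 : coeff (mm 1 1) q + coeff (mm 1 2) q - coeff (mm 1 4) q - coeff (mm 1 5) q + coeff (mm 2 2) q - coeff (mm 2 4) q - coeff (mm 2 5) q + coeff (mm 4 4) q + coeff (mm 4 5) q + coeff (mm 5 5) q = 0 := by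
    have h := hvanish (pt (0) (1) (1) (0) (-1) (-1))
      ⟨({{0, 3}, {1, 2}, {4, 5}} : Finset (Finset (Fin 6))), by unfold IsPerfectMatching; decide, by
        constructor
        · simp [Fin.sum_univ_six]; try ring
        · intro p hp a ha b hb
          fin_cases hp <;> fin_cases ha <;> fin_cases hb <;> simp⟩
    rw [hev] at h
    simp only [pt0, pt1, pt2, pt3, pt4, pt5] at h
    linear_combination h
  have E13 : coeff (mm 0 0) q - coeff (mm 0 3) q + coeff (mm 0 4) q - coeff (mm 0 5) q + coeff (mm 3 3) q - coeff (mm 3 4) q + coeff (mm 3 5) q + coeff (mm 4 4) q - coeff (mm 4 5) q + coeff (mm 5 5) q = 0 := by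
    have h := hvanish (pt (1) (0) (0) (-1) (1) (-1))
      ⟨({{0, 4}, {1, 2}, {3, 5}} : Finset (Finset (Fin 6))), by unfold IsPerfectMatching; decide, by
        constructor
        · simp [Fin.sum_univ_six]; try ring
        · intro p hp a ha b hb
          fin_cases hp <;> fin_cases ha <;> fin_cases hb <;> simp⟩
    rw [hev] at h
    simp only [pt0, pt1, pt2, pt3, pt4, pt5] at h
    linear_combination h
  have E14 : coeff (mm 0 0) q - coeff (mm 0 3) q - coeff (mm 0 4) q + coeff (mm 0 5) q + coeff (mm 3 3) q + coeff (mm 3 4) q - coeff (mm 3 5) q + coeff (mm 4 4) q - coeff (mm 4 5) q + coeff (mm 5 5) q = 0 := by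
    have h := hvanish (pt (1) (0) (0) (-1) (-1) (1))
      ⟨({{0, 5}, {1, 2}, {3, 4}} : Finset (Finset (Fin 6))), by unfold IsPerfectMatching; decide, by
        constructor
        · simp [Fin.sum_univ_six]; try ring
        · intro p hp a ha b hb
          fin_cases hp <;> fin_cases ha <;> fin_cases hb <;> simp⟩
    rw [hev] at h
    simp only [pt0, pt1, pt2, pt3, pt4, pt5] at h
    linear_combination h
  have R01 : coeff (mm 0 1) q = coeff (mm 0 0) q + coeff (mm 1 1) q := by
    linear_combination (1/2 : ℂ) * E0 + (1/2 : ℂ) * E1 + (5/6 : ℂ) * E2 + (-1/6 : ℂ) * E3 + (1/6 : ℂ) * E4 + (-1/6 : ℂ) * E5 + (1/6 : ℂ) * E6 + (-11/6 : ℂ) * E7 + (-7/6 : ℂ) * E8 + (1/2 : ℂ) * E9 + (1/2 : ℂ) * E10 + (-2/3 : ℂ) * E11 + (-5/6 : ℂ) * E12 + (-1/4 : ℂ) * E13 + (-1/4 : ℂ) * E14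
  have R02 : coeff (mm 0 2) q = coeff (mm 0 0) q + coeff (mm 2 2) q := by
    linear_combination (-5/2 : ℂ) * E0 + (-3/2 : ℂ) * E1 + (5/6 : ℂ) * E2 + (5/6 : ℂ) * E3 + (1/6 : ℂ) * E4 + (5/6 : ℂ) * E5 + (1/6 : ℂ) * E6 + (7/6 : ℂ) * E7 + (5/6 : ℂ) * E8 + (-1/2 : ℂ) * E9 + (-1/2 : ℂ) * E10 + (-2/3 : ℂ) * E11 + (-5/6 : ℂ) * E12 + (-1/4 : ℂ) * E13 + (-1/4 : ℂ) * E14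
  have R03 : coeff (mm 0 3) q = coeff (mm 0 0) q + coeff (mm 3 3) q := by
    linear_combination (-1/2 : ℂ) * E0 + (-1/2 : ℂ) * E1 + (1/6 : ℂ) * E2 + (1/6 : ℂ) * E3 + (1/3 : ℂ) * E4 + (1/6 : ℂ) * E5 + (1/3 : ℂ) * E6 + (5/6 : ℂ) * E7 + (1/6 : ℂ) * E8 + (-1/2 : ℂ) * E9 + (-1/2 : ℂ) * E10 + (-1/3 : ℂ) * E11 + (-1/6 : ℂ) * E12 + (-1/4 : ℂ) * E13 + (-1/4 : ℂ) * E14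
  have R04 : coeff (mm 0 4) q = coeff (mm 0 0) q + coeff (mm 4 4) q := by
    linear_combination (-1/2 : ℂ) * E0 + (1/6 : ℂ) * E2 + (1/6 : ℂ) * E3 + (-1/6 : ℂ) * E4 + (1/6 : ℂ) * E5 + (1/3 : ℂ) * E6 + (-1/6 : ℂ) * E7 + (1/6 : ℂ) * E8 + (1/2 : ℂ) * E9 + (-1/2 : ℂ) * E10 + (-1/3 : ℂ) * E11 + (-1/6 : ℂ) * E12 + (-1/4 : ℂ) * E13 + (-1/4 : ℂ) * E14
  have R05 : coeff (mm 0 5) q = coeff (mm 0 0) q + coeff (mm 5 5) q := by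
    linear_combination (-1/2 : ℂ) * E0 + (1/6 : ℂ) * E2 + (1/6 : ℂ) * E3 + (1/3 : ℂ) * E4 + (1/6 : ℂ) * E5 + (-1/6 : ℂ) * E6 + (-1/6 : ℂ) * E7 + (1/6 : ℂ) * E8 + (-1/2 : ℂ) * E9 + (1/2 : ℂ) * E10 + (-1/3 : ℂ) * E11 + (-1/6 : ℂ) * E12 + (-1/4 : ℂ) * E13 + (-1/4 : ℂ) * E14
  have R12 : coeff (mm 1 2) q = coeff (mm 1 1) q + coeff (mm 2 2) q := by
    linear_combination (-1/2 : ℂ) * E0 + (-1/2 : ℂ) * E1 + (5/6 : ℂ) * E2 + (-1/6 : ℂ) * E3 + (-1/3 : ℂ) * E4 + (-1/6 : ℂ) * E5 + (-1/3 : ℂ) * E6 + (-11/6 : ℂ) * E7 + (-7/6 : ℂ) * E8 + (1/2 : ℂ) * E9 + (1/2 : ℂ) * E10 + (1/3 : ℂ) * E11 + (1/6 : ℂ) * E12 + (1/4 : ℂ) * E13 + (1/4 : ℂ) * E14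
  have R13 : coeff (mm 1 3) q = coeff (mm 1 1) q + coeff (mm 3 3) q := by
    linear_combination (3/2 : ℂ) * E0 + (1/2 : ℂ) * E1 + (1/6 : ℂ) * E2 + (-5/6 : ℂ) * E3 + (-1/6 : ℂ) * E4 + (-5/6 : ℂ) * E5 + (-1/6 : ℂ) * E6 + (-7/6 : ℂ) * E7 + (-5/6 : ℂ) * E8 + (1/2 : ℂ) * E9 + (1/2 : ℂ) * E10 + (-1/3 : ℂ) * E11 + (-1/6 : ℂ) * E12 + (1/4 : ℂ) * E13 + (1/4 : ℂ) * E14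
  have R14 : coeff (mm 1 4) q = coeff (mm 1 1) q + coeff (mm 4 4) q := by
    linear_combination (1/2 : ℂ) * E0 + (1/2 : ℂ) * E1 + (1/6 : ℂ) * E2 + (1/6 : ℂ) * E3 + (-1/6 : ℂ) * E4 + (-5/6 : ℂ) * E5 + (-1/6 : ℂ) * E6 + (-7/6 : ℂ) * E7 + (-5/6 : ℂ) * E8 + (1/2 : ℂ) * E9 + (1/2 : ℂ) * E10 + (1/6 : ℂ) * E11 + (-1/6 : ℂ) * E12 + (-1/4 : ℂ) * E13 + (1/4 : ℂ) * E14
  have R15 : coeff (mm 1 5) q = coeff (mm 1 1) q + coeff (mm 5 5) q := by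
    linear_combination (1/2 : ℂ) * E0 + (1/2 : ℂ) * E1 + (1/6 : ℂ) * E2 + (-5/6 : ℂ) * E3 + (-1/6 : ℂ) * E4 + (1/6 : ℂ) * E5 + (-1/6 : ℂ) * E6 + (-7/6 : ℂ) * E7 + (-5/6 : ℂ) * E8 + (1/2 : ℂ) * E9 + (1/2 : ℂ) * E10 + (1/6 : ℂ) * E11 + (-1/6 : ℂ) * E12 + (1/4 : ℂ) * E13 + (-1/4 : ℂ) * E14
  have R23 : coeff (mm 2 3) q = coeff (mm 2 2) q + coeff (mm 3 3) q := by
    linear_combination (-1/2 : ℂ) * E0 + (-1/2 : ℂ) * E1 + (1/6 : ℂ) * E2 + (1/6 : ℂ) * E3 + (-1/6 : ℂ) * E4 + (1/6 : ℂ) * E5 + (-1/6 : ℂ) * E6 + (5/6 : ℂ) * E7 + (1/6 : ℂ) * E8 + (-1/2 : ℂ) * E9 + (-1/2 : ℂ) * E10 + (-1/3 : ℂ) * E11 + (-1/6 : ℂ) * E12 + (1/4 : ℂ) * E13 + (1/4 : ℂ) * E14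
  have R24 : coeff (mm 2 4) q = coeff (mm 2 2) q + coeff (mm 4 4) q := by
    linear_combination (-1/2 : ℂ) * E0 + (-1/2 : ℂ) * E1 + (1/6 : ℂ) * E2 + (1/6 : ℂ) * E3 + (-1/6 : ℂ) * E4 + (1/6 : ℂ) * E5 + (-1/6 : ℂ) * E6 + (-1/6 : ℂ) * E7 + (1/6 : ℂ) * E8 + (1/2 : ℂ) * E9 + (-1/2 : ℂ) * E10 + (1/6 : ℂ) * E11 + (-1/6 : ℂ) * E12 + (-1/4 : ℂ) * E13 + (1/4 : ℂ) * E14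
  have R25 : coeff (mm 2 5) q = coeff (mm 2 2) q + coeff (mm 5 5) q := by
    linear_combination (-1/2 : ℂ) * E0 + (-1/2 : ℂ) * E1 + (1/6 : ℂ) * E2 + (1/6 : ℂ) * E3 + (-1/6 : ℂ) * E4 + (1/6 : ℂ) * E5 + (-1/6 : ℂ) * E6 + (-1/6 : ℂ) * E7 + (1/6 : ℂ) * E8 + (-1/2 : ℂ) * E9 + (1/2 : ℂ) * E10 + (1/6 : ℂ) * E11 + (-1/6 : ℂ) * E12 + (1/4 : ℂ) * E13 + (-1/4 : ℂ) * E14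
  have R34 : coeff (mm 3 4) q = coeff (mm 3 3) q + coeff (mm 4 4) q := by
    linear_combination (1/2 : ℂ) * E0 + (-1/6 : ℂ) * E2 + (-1/6 : ℂ) * E3 + (-1/3 : ℂ) * E4 + (-1/6 : ℂ) * E5 + (1/6 : ℂ) * E6 + (1/6 : ℂ) * E7 + (-1/6 : ℂ) * E8 + (1/2 : ℂ) * E9 + (-1/2 : ℂ) * E10 + (-1/6 : ℂ) * E11 + (1/6 : ℂ) * E12 + (-1/4 : ℂ) * E13 + (1/4 : ℂ) * E14
  have R35 : coeff (mm 3 5) q = coeff (mm 3 3) q + coeff (mm 5 5) q := by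
    linear_combination (1/2 : ℂ) * E0 + (-1/6 : ℂ) * E2 + (-1/6 : ℂ) * E3 + (1/6 : ℂ) * E4 + (-1/6 : ℂ) * E5 + (-1/3 : ℂ) * E6 + (1/6 : ℂ) * E7 + (-1/6 : ℂ) * E8 + (-1/2 : ℂ) * E9 + (1/2 : ℂ) * E10 + (-1/6 : ℂ) * E11 + (1/6 : ℂ) * E12 + (1/4 : ℂ) * E13 + (-1/4 : ℂ) * E14
  have R45 : coeff (mm 4 5) q = coeff (mm 4 4) q + coeff (mm 5 5) q := by
    linear_combination (1/2 : ℂ) * E0 + (1/2 : ℂ) * E1 + (-1/6 : ℂ) * E2 + (-1/6 : ℂ) * E3 + (-1/3 : ℂ) * E4 + (-1/6 : ℂ) * E5 + (-1/3 : ℂ) * E6 + (-5/6 : ℂ) * E7 + (-1/6 : ℂ) * E8 + (1/2 : ℂ) * E9 + (1/2 : ℂ) * E10 + (1/3 : ℂ) * E11 + (1/6 : ℂ) * E12 + (-1/4 : ℂ) * E13 + (-1/4 : ℂ) * E14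
  have hrel : ∀ k l : Fin 6, k < l →
      coeff (mm k l) q = coeff (mm k k) q + coeff (mm l l) q := by
    intro k l hkl
    fin_cases k <;> fin_cases l <;>
      first
        | exact absurd hkl (by decide)
        | exact R01 | exact R02 | exact R03 | exact R04 | exact R05 | exact R12 | exact R13 | exact R14 | exact R15 | exact R23 | exact R24 | exact R25 | exact R34 | exact R35 | exact R45
  refine ⟨∑ i : Fin 6, C (coeff (mm i i) q) * X i, ?_, ?_⟩
  · exact MvPolynomial.IsHomogeneous.sum _ _ 1
      fun i _ => isHomogeneous_C_mul_X _ i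
  · have hsl : (∑ i : Fin 6, X i) * (∑ i : Fin 6, C (coeff (mm i i) q) * X i)
        = ∑ p : Fin 6 × Fin 6, monomial (mm p.1 p.2) (coeff (mm p.2 p.2) q) := by
      rw [Finset.sum_mul_sum, Fintype.sum_prod_type]
      refine Finset.sum_congr rfl fun i _ => Finset.sum_congr rfl fun j _ => ?_
      rw [monomial_mm]
      ring
    rw [hsl]
    apply MvPolynomial.ext
    intro d
    by_cases hd : d.degree = 2
    · obtain ⟨k, l, hkl, rfl⟩ := classify d hd
      rcases hkl.lt_or_eq with hlt | rfl
      · rw [coeff_msum_offdiag _ hlt.ne]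
        linear_combination hrel k l hlt
      · rw [coeff_msum_diag]
    · rw [coeff_msum_ne _ _ hd, hq.coeff_eq_zero hd]

end IgusaAux
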